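/- Let d₁ ∈ {0,…,d} and let U ∈ ℝ^{d×d₁} have orthonormal columns (UᵀU = I). For v ∈ ℝ^d write v_U = UUᵀv and v_{U⊥} = v − UUᵀv. Let α = 1/3, β ≥ 0, and K ≥ 2 with 4K²β ≤ 1 and (1/3)^K ≤ β. Let z_r ∈ ℝ^d with ‖z_r‖₂ ≤ 2, and suppose w_0, …, w_K and y_1, …, y_K in ℝ^d satisfy: ‖w_0 − (z_r)_{U⊥}‖₂ ≤ α‖(z_r)_{U⊥}‖₂ + β‖z_r‖₂; for each k ∈ [K], ‖y_k − (w_{k−1})_U‖₂ ≤ α‖(w_{k−1})_U‖₂ + β‖w_{k−1}‖₂ and w_k = w_{k−1} − y_k. Define z_{r+1} = z_r − w_K. Then: (i) ‖(z_{r+1})_U − (z_r)_U‖₂ ≤ 4(K+2)β; (ii) ‖(z_{r+1})_{U⊥}‖₂ ≤ (2/3)‖(z_r)_{U⊥}‖₂ + 4K²β; and (iii) ‖z_{r+1}‖₂² ≤ ‖z_r‖₂² + 16K²β‖z_r‖₂ + 32K⁴β². -/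
import Mathlib

open Matrix

set_option maxHeartbeats 1000000

/-- Euclidean norm of a vector in `ℝ^d`. -/
noncomputable def nrm {d : ℕ} (v : Fin d → ℝ) : ℝ := Real.sqrt (v ⬝ᵥ v)

/-- Orthogonal projection onto the column span of `U`: `v_U = UUᵀv`. -/
def pU {d dOne : ℕ} (U : Matrix (Fin d) (Fin dOne) ℝ) (v : Fin d → ℝ) : Fin d → ℝ :=
  U *ᵥ (Uᵀ *ᵥ v)

/-- Complementary projection: `v_{U⊥} = v − UUᵀv`. -/
def pPerp {d dOne : ℕ} (U : Matrix (Fin d) (Fin dOne) ℝ) (v : Fin d → ℝ) : Fin d → ℝ :=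
  v - pU U v

section Aux
variable {d dOne : ℕ} {U : Matrix (Fin d) (Fin dOne) ℝ}

lemma dot_self_nonneg' (v : Fin d → ℝ) : 0 ≤ v ⬝ᵥ v :=
  Finset.sum_nonneg fun _ _ => mul_self_nonneg _
lemma nrm_nonneg (v : Fin d → ℝ) : 0 ≤ nrm v := Real.sqrt_nonneg _
lemma nrm_sq (v : Fin d → ℝ) : nrm v ^ 2 = v ⬝ᵥ v := Real.sq_sqrt (dot_self_nonneg' v)
lemma nrm_eq_norm (v : Fin d → ℝ) :
    nrm v = ‖((WithLp.equiv 2 (Fin d → ℝ)).symm v : EuclideanSpace ℝ (Fin d))‖ := by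
  rw [nrm, EuclideanSpace.norm_eq]
  congr 1
  simp [dotProduct, Real.norm_eq_abs, sq_abs, sq]
lemma nrm_zero : nrm (0 : Fin d → ℝ) = 0 := by simp [nrm]
lemma nrm_neg (v : Fin d → ℝ) : nrm (-v) = nrm v := by
  simp only [nrm_eq_norm]
  rw [show (WithLp.equiv 2 (Fin d → ℝ)).symm (-v)
      = -((WithLp.equiv 2 (Fin d → ℝ)).symm v) from rfl, norm_neg]
lemma nrm_add_le (u v : Fin d → ℝ) : nrm (u + v) ≤ nrm u + nrm v := by
  simp only [nrm_eq_norm]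
  rw [show (WithLp.equiv 2 (Fin d → ℝ)).symm (u + v)
      = (WithLp.equiv 2 (Fin d → ℝ)).symm u + (WithLp.equiv 2 (Fin d → ℝ)).symm v from rfl]
  exact norm_add_le _ _
lemma nrm_sub_comm (u v : Fin d → ℝ) : nrm (u - v) = nrm (v - u) := by
  rw [← nrm_neg (u - v)]; congr 1; abel
lemma nrm_tri (u v x : Fin d → ℝ) : nrm (u - x) ≤ nrm (u - v) + nrm (v - x) := by
  have h : u - x = (u - v) + (v - x) := by abel
  rw [h]; exact nrm_add_le _ _
lemma nrm_sub_le (u v : Fin d → ℝ) : nrm (u - v) ≤ nrm u + nrm v := by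
  rw [sub_eq_add_neg]
  exact le_trans (nrm_add_le _ _) (by rw [nrm_neg])

lemma UtU (hU : Uᵀ * U = 1) (x : Fin dOne → ℝ) : Uᵀ *ᵥ (U *ᵥ x) = x := by
  rw [Matrix.mulVec_mulVec, hU, Matrix.one_mulVec]
lemma pU_sub (u v : Fin d → ℝ) : pU U (u - v) = pU U u - pU U v := by
  simp [pU, Matrix.mulVec_sub]
lemma pU_pU (hU : Uᵀ * U = 1) (v : Fin d → ℝ) : pU U (pU U v) = pU U v := by
  simp only [pU, UtU hU]
lemma pU_pPerp (hU : Uᵀ * U = 1) (v : Fin d → ℝ) : pU U (pPerp U v) = 0 := by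
  rw [pPerp, pU_sub, pU_pU hU, sub_self]
lemma pPerp_sub (u v : Fin d → ℝ) : pPerp U (u - v) = pPerp U u - pPerp U v := by
  rw [pPerp, pPerp, pPerp, pU_sub]; abel
lemma pPerp_pPerp (hU : Uᵀ * U = 1) (v : Fin d → ℝ) : pPerp U (pPerp U v) = pPerp U v := by
  rw [pPerp, pU_pPerp hU, sub_zero]
lemma pPerp_pU (hU : Uᵀ * U = 1) (v : Fin d → ℝ) : pPerp U (pU U v) = 0 := by
  rw [pPerp, pU_pU hU, sub_self]
lemma dot_pU (v x : Fin d → ℝ) : pU U v ⬝ᵥ x = (Uᵀ *ᵥ v) ⬝ᵥ (Uᵀ *ᵥ x) := by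
  rw [pU, dotProduct_comm, Matrix.dotProduct_mulVec, ← Matrix.mulVec_transpose,
    dotProduct_comm]
lemma dot_pU_pPerp (hU : Uᵀ * U = 1) (v x : Fin d → ℝ) : pU U v ⬝ᵥ pPerp U x = 0 := by
  rw [dot_pU, pPerp, Matrix.mulVec_sub, pU, UtU hU, sub_self, dotProduct_zero]
lemma pyth (hU : Uᵀ * U = 1) (v : Fin d → ℝ) :
    nrm v ^ 2 = nrm (pU U v) ^ 2 + nrm (pPerp U v) ^ 2 := by
  rw [nrm_sq, nrm_sq, nrm_sq]
  have hv : v = pU U v + pPerp U v := by rw [pPerp]; abel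
  have h1 : pU U v ⬝ᵥ pPerp U v = 0 := dot_pU_pPerp hU v v
  have h2 : pPerp U v ⬝ᵥ pU U v = 0 := by rw [dotProduct_comm]; exact h1
  conv_lhs => rw [hv]
  rw [add_dotProduct, dotProduct_add, dotProduct_add, h1, h2]
  ring
lemma nrm_pU_le (hU : Uᵀ * U = 1) (v : Fin d → ℝ) : nrm (pU U v) ≤ nrm v := by
  have h := pyth hU v
  nlinarith [nrm_nonneg (pU U v), nrm_nonneg v, nrm_nonneg (pPerp U v), sq_nonneg (nrm (pPerp U v))]
lemma nrm_pPerp_le (hU : Uᵀ * U = 1) (v : Fin d → ℝ) : nrm (pPerp U v) ≤ nrm v := by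
  have h := pyth hU v
  nlinarith [nrm_nonneg (pU U v), nrm_nonneg v, nrm_nonneg (pPerp U v)]
lemma nrm_le_add (hU : Uᵀ * U = 1) (v : Fin d → ℝ) :
    nrm v ≤ nrm (pU U v) + nrm (pPerp U v) := by
  have h := pyth hU v
  nlinarith [nrm_nonneg (pU U v), nrm_nonneg v, nrm_nonneg (pPerp U v)]
end Aux

lemma arith_iii (P c Z kk β A B : ℝ)
    (hP0 : 0 ≤ P) (hPZ : P ≤ Z) (hc0 : 0 ≤ c) (hcZ : c ≤ Z) (hZ2 : Z ≤ 2)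
    (hβ : 0 ≤ β) (hk : 16 ≤ kk) (hkβ : 4 * kk * β ≤ 1)
    (hA : A ≤ (P + (β * Z + 6 * β)) ^ 2) (hB : B ≤ (2/3 * c + 4 * kk * β) ^ 2) :
    A + B ≤ P ^ 2 + c ^ 2 + 16 * kk * β * Z + 32 * kk ^ 2 * β ^ 2 := by
  have hZ0 : 0 ≤ Z := le_trans hP0 hPZ
  have hX0 : 0 ≤ β * Z + 6 * β := by positivity
  have hβZ : 0 ≤ β * Z := mul_nonneg hβ hZ0
  have s1 : 2 * P * (β * Z + 6 * β) ≤ 16 * (β * Z) := by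
    nlinarith [mul_nonneg (sub_nonneg.mpr hPZ) hX0, mul_nonneg hβZ (sub_nonneg.mpr hZ2)]
  have hX8 : β * Z + 6 * β ≤ 8 * β := by nlinarith [mul_nonneg hβ (sub_nonneg.mpr hZ2)]
  have s2 : (β * Z + 6 * β) ^ 2 ≤ 64 * β ^ 2 := by
    nlinarith [pow_le_pow_left₀ hX0 hX8 2]
  have s3 : 16/3 * c * (kk * β) ≤ 16/3 * Z * (kk * β) :=
    mul_le_mul_of_nonneg_right (by linarith) (by nlinarith)
  have s4 : 16 * (β * Z) + 16/3 * Z * (kk * β) ≤ 16 * kk * β * Z := by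
    nlinarith [mul_nonneg (sub_nonneg.mpr hk) hβZ, mul_nonneg (mul_nonneg (by linarith : (0:ℝ) ≤ kk) hβ) hZ0]
  have s5 : 64 * β ^ 2 + 16 * kk ^ 2 * β ^ 2 ≤ 32 * kk ^ 2 * β ^ 2 := by
    nlinarith [mul_nonneg (mul_nonneg hβ hβ) (sub_nonneg.mpr hk), sq_nonneg β,
      mul_le_mul_of_nonneg_right (by nlinarith : (256:ℝ) ≤ kk ^ 2) (sq_nonneg β)]
  nlinarith [sq_nonneg c]

/-- Lemma 4.5: guarantee of one outer round of the hardness-amplification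
procedure, Algorithm 1, with `α = 1/3` and explicit constants. Setting
`z_{r+1} = z_r − w_K`: (i) the `U`-component moves by at most `4(K+2)β`; (ii) the orthogonal
component contracts by a factor `2/3` up to `4K²β`; (iii) the squared norm grows by at most
`16K²β‖z_r‖ + 32K⁴β²`. -/
theorem outer_round_guarantee {d dOne : ℕ} (hdOne : dOne ≤ d)
    (U : Matrix (Fin d) (Fin dOne) ℝ) (hU : Uᵀ * U = 1)
    (β : ℝ) (hβ : 0 ≤ β)
    (K : ℕ) (hK : 2 ≤ K) (hKβ : 4 * (K : ℝ) ^ 2 * β ≤ 1) (hβK : (1 / 3 : ℝ) ^ K ≤ β)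
    (zr : Fin d → ℝ) (hzr : nrm zr ≤ 2)
    (w y : ℕ → Fin d → ℝ)
    (hw0 : nrm (w 0 - pPerp U zr) ≤ (1 / 3) * nrm (pPerp U zr) + β * nrm zr)
    (hy : ∀ k, 1 ≤ k → k ≤ K →
      nrm (y k - pU U (w (k - 1))) ≤ (1 / 3) * nrm (pU U (w (k - 1))) + β * nrm (w (k - 1)))
    (hw : ∀ k, 1 ≤ k → k ≤ K → w k = w (k - 1) - y k) :
    nrm (pU U (zr - w K) - pU U zr) ≤ 4 * ((K : ℝ) + 2) * β ∧
    nrm (pPerp U (zr - w K)) ≤ (2 / 3) * nrm (pPerp U zr) + 4 * (K : ℝ) ^ 2 * β ∧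
    (nrm (zr - w K)) ^ 2 ≤
      (nrm zr) ^ 2 + 16 * (K : ℝ) ^ 2 * β * nrm zr + 32 * (K : ℝ) ^ 4 * β ^ 2 := by
  -- small K are vacuous
  have hK4 : 4 ≤ K := by
    by_contra h
    push_neg at h
    interval_cases K <;> norm_num at hβK hKβ <;> linarith
  have hKr : (4:ℝ) ≤ (K:ℝ) := by exact_mod_cast hK4
  have hK2 : (16:ℝ) ≤ (K:ℝ)^2 := by nlinarith
  have hβ64 : β ≤ 1/64 := by nlinarith [mul_le_mul_of_nonneg_right hK2 hβ]
  have hKβ1 : (K:ℝ)*β ≤ 1/16 := by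
    nlinarith [mul_nonneg (sub_nonneg.mpr hKr) (mul_nonneg (Nat.cast_nonneg K : (0:ℝ) ≤ K) hβ)]
  have h45 : (0:ℝ) ≤ 4*(K:ℝ)^2 - 6*(K:ℝ) - 3 := by nlinarith
  have hfin : 3*β + 6*(K:ℝ)*β ≤ 4*(K:ℝ)^2*β := by nlinarith [mul_nonneg hβ h45]
  have hZ0 : (0:ℝ) ≤ nrm zr := nrm_nonneg _
  have hc0 : (0:ℝ) ≤ nrm (pPerp U zr) := nrm_nonneg _
  have hcZ : nrm (pPerp U zr) ≤ nrm zr := nrm_pPerp_le hU zr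
  have hβZ : β * nrm zr ≤ 2 * β := by nlinarith
  -- basic facts about w 0
  have ha0b : nrm (pU U (w 0)) ≤ 1/3 * nrm (pPerp U zr) + β * nrm zr := by
    have h1 : pU U (w 0) = pU U (w 0 - pPerp U zr) := by
      rw [pU_sub, pU_pPerp hU, sub_zero]
    rw [h1]
    exact le_trans (nrm_pU_le hU _) hw0
  have hperp0 : nrm (pPerp U (w 0) - pPerp U zr) ≤ 1/3 * nrm (pPerp U zr) + β * nrm zr := by
    have h1 : pPerp U (w 0) - pPerp U zr = pPerp U (w 0 - pPerp U zr) := by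
      rw [pPerp_sub, pPerp_pPerp hU]
    rw [h1]
    exact le_trans (nrm_pPerp_le hU _) hw0
  have hb0b : nrm (pPerp U (w 0)) ≤ nrm (pPerp U zr) + (1/3 * nrm (pPerp U zr) + β * nrm zr) := by
    have h1 : pPerp U (w 0) = (pPerp U (w 0) - pPerp U zr) + pPerp U zr := by abel
    rw [h1]
    exact le_trans (nrm_add_le _ _) (by linarith)
  have ha00 : (0:ℝ) ≤ nrm (pU U (w 0)) := nrm_nonneg _
  -- the one-step estimate
  have hstep : ∀ k, k + 1 ≤ K →
      nrm (pU U (w (k+1))) ≤ 1/3 * nrm (pU U (w k)) + β * nrm (w k) ∧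
      nrm (pPerp U (w (k+1)) - pPerp U (w k)) ≤ 1/3 * nrm (pU U (w k)) + β * nrm (w k) := by
    intro k hk
    have h1 : 1 ≤ k + 1 := by omega
    have hwk := hw (k+1) h1 hk
    have hyk := hy (k+1) h1 hk
    simp only [Nat.add_sub_cancel] at hwk hyk
    have hE : nrm (pU U (w k) - y (k+1)) ≤ 1/3 * nrm (pU U (w k)) + β * nrm (w k) := by
      rw [nrm_sub_comm]
      exact hyk
    constructor
    · have h2 : pU U (w (k+1)) = pU U (pU U (w k) - y (k+1)) := by
        rw [hwk, pU_sub, pU_sub, pU_pU hU]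
      rw [h2]
      exact le_trans (nrm_pU_le hU _) hE
    · have h2 : pPerp U (w (k+1)) - pPerp U (w k) = pPerp U (pU U (w k) - y (k+1)) := by
        rw [hwk, pPerp_sub, pPerp_sub, pPerp_pU hU]
        abel
      rw [h2]
      exact le_trans (nrm_pPerp_le hU _) hE
  -- growth control
  have hs : ∀ k, k ≤ K → nrm (pU U (w k)) + nrm (pPerp U (w k))
      ≤ (nrm (pU U (w 0)) + nrm (pPerp U (w 0))) + 8 * k * β := by
    intro k
    induction k with
    | zero => intro _; simp
    | succ k ih =>
      intro hk1
      have hk : k ≤ K := by omega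
      have ihk := ih hk
      obtain ⟨h1, h2⟩ := hstep k hk1
      have hkK : (k:ℝ) ≤ (K:ℝ) := by exact_mod_cast hk
      have hkβ : 8 * (k:ℝ) * β ≤ 8 * (K:ℝ) * β :=
        mul_le_mul_of_nonneg_right (by linarith) hβ
      have hnk4 : nrm (w k) ≤ 4 := by
        have h3 := nrm_le_add hU (w k)
        linarith
      have hβn : β * nrm (w k) ≤ β * 4 := mul_le_mul_of_nonneg_left hnk4 hβ
      have hb' : nrm (pPerp U (w (k+1)))
          ≤ nrm (pPerp U (w k)) + (1/3 * nrm (pU U (w k)) + β * nrm (w k)) := by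
        have h3 : pPerp U (w (k+1))
            = (pPerp U (w (k+1)) - pPerp U (w k)) + pPerp U (w k) := by abel
        rw [h3]
        exact le_trans (nrm_add_le _ _) (by linarith)
      have hcast : ((k+1 : ℕ):ℝ) = (k:ℝ) + 1 := by push_cast; ring
      rw [hcast]
      have ha0k : (0:ℝ) ≤ nrm (pU U (w k)) := nrm_nonneg _
      linarith
  have hn4 : ∀ k, k ≤ K → nrm (w k) ≤ 4 := by
    intro k hk
    have h1 := hs k hk
    have h2 := nrm_le_add hU (w k)
    have hkK : (k:ℝ) ≤ (K:ℝ) := by exact_mod_cast hk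
    have hkβ : 8 * (k:ℝ) * β ≤ 8 * (K:ℝ) * β :=
      mul_le_mul_of_nonneg_right (by linarith) hβ
    linarith
  -- decay of the U-component
  have hacap : ∀ k, k ≤ K → nrm (pU U (w k)) ≤ (1/3:ℝ)^k * nrm (pU U (w 0)) + 6 * β := by
    intro k
    induction k with
    | zero => intro _; simp; linarith
    | succ k ih =>
      intro hk1
      have hk : k ≤ K := by omega
      have ihk := ih hk
      obtain ⟨h1, _⟩ := hstep k hk1
      have hβn : β * nrm (w k) ≤ β * 4 := mul_le_mul_of_nonneg_left (hn4 k hk) hβ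
      rw [pow_succ]
      linarith
  -- drift of the perp component
  have hD : ∀ k, k ≤ K → nrm (pPerp U (w k) - pPerp U (w 0))
      ≤ 1/2 * (1 - (1/3:ℝ)^k) * nrm (pU U (w 0)) + 6 * k * β := by
    intro k
    induction k with
    | zero => intro _; simp [sub_self, nrm_zero]
    | succ k ih =>
      intro hk1
      have hk : k ≤ K := by omega
      have ihk := ih hk
      obtain ⟨_, h2⟩ := hstep k hk1
      have hβn : β * nrm (w k) ≤ β * 4 := mul_le_mul_of_nonneg_left (hn4 k hk) hβ
      have hak := hacap k hk
      have htri := nrm_tri (pPerp U (w (k+1))) (pPerp U (w k)) (pPerp U (w 0))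
      have hcast : ((k+1 : ℕ):ℝ) = (k:ℝ) + 1 := by push_cast; ring
      rw [hcast, pow_succ]
      linarith
  -- part (i)
  have hi : nrm (pU U (zr - w K) - pU U zr) ≤ 4 * ((K : ℝ) + 2) * β := by
    have heq : pU U (zr - w K) - pU U zr = -(pU U (w K)) := by
      rw [pU_sub]; abel
    rw [heq, nrm_neg]
    have h1 := hacap K le_rfl
    have ha0le : nrm (pU U (w 0)) ≤ 1 := by linarith
    have h2 : (1/3:ℝ)^K * nrm (pU U (w 0)) ≤ β * 1 :=
      mul_le_mul hβK ha0le ha00 hβ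
    have h7 : 7*β ≤ 4*((K:ℝ)+2)*β :=
      mul_le_mul_of_nonneg_right (by linarith : (7:ℝ) ≤ 4*((K:ℝ)+2)) hβ
    linarith
  -- part (ii)
  have hii : nrm (pPerp U (zr - w K)) ≤ 2/3 * nrm (pPerp U zr) + 4*(K:ℝ)^2*β := by
    have heq : pPerp U (zr - w K)
        = (pPerp U zr - pPerp U (w 0)) + (pPerp U (w 0) - pPerp U (w K)) := by
      rw [pPerp_sub]; abel
    rw [heq]
    have t1 : nrm (pPerp U zr - pPerp U (w 0)) ≤ 1/3 * nrm (pPerp U zr) + β * nrm zr := by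
      rw [nrm_sub_comm]; exact hperp0
    have hq : (0:ℝ) ≤ (1/3:ℝ)^K := by positivity
    have t2 : nrm (pPerp U (w 0) - pPerp U (w K)) ≤ 1/2 * nrm (pU U (w 0)) + 6*(K:ℝ)*β := by
      rw [nrm_sub_comm]
      have h3 := hD K le_rfl
      linarith [mul_nonneg hq ha00]
    have h3 := nrm_add_le (pPerp U zr - pPerp U (w 0)) (pPerp U (w 0) - pPerp U (w K))
    linarith
  refine ⟨hi, hii, ?_⟩
  -- part (iii)
  have ha0Z : nrm (pU U (w 0)) ≤ nrm zr := by
    have hb23 : β * nrm zr ≤ 2/3 * nrm zr :=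
      mul_le_mul_of_nonneg_right (by linarith) hZ0
    linarith
  have haK2 : nrm (pU U (w K)) ≤ β * nrm zr + 6 * β := by
    have h1 := hacap K le_rfl
    have h2 : (1/3:ℝ)^K * nrm (pU U (w 0)) ≤ β * nrm zr :=
      mul_le_mul hβK ha0Z ha00 hβ
    linarith
  have hpUz : nrm (pU U (zr - w K)) ≤ nrm (pU U zr) + (β * nrm zr + 6 * β) := by
    rw [pU_sub]
    exact le_trans (nrm_sub_le _ _) (by linarith)
  have hP : nrm (pU U zr) ≤ nrm zr := nrm_pU_le hU zr
  have hP0 : (0:ℝ) ≤ nrm (pU U zr) := nrm_nonneg _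
  have hA : nrm (pU U (zr - w K))^2 ≤ (nrm (pU U zr) + (β * nrm zr + 6 * β))^2 :=
    pow_le_pow_left₀ (nrm_nonneg _) hpUz 2
  have hB : nrm (pPerp U (zr - w K))^2 ≤ (2/3 * nrm (pPerp U zr) + 4*(K:ℝ)^2*β)^2 :=
    pow_le_pow_left₀ (nrm_nonneg _) hii 2
  have hpz := pyth hU (zr - w K)
  have hpz2 := pyth hU zr
  have key := arith_iii (nrm (pU U zr)) (nrm (pPerp U zr)) (nrm zr) ((K:ℝ)^2) β
      (nrm (pU U (zr - w K))^2) (nrm (pPerp U (zr - w K))^2)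
      hP0 hP hc0 hcZ hzr hβ hK2 hKβ hA hB
  have hk4 : ((K:ℝ)^2)^2 = (K:ℝ)^4 := by ring
  linarith [key]
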